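/- For all real numbers x ≥ 1, y > 0 and z > 0, one has (x + y)^z ≤ x^z + x^{z−1} · max((1 + y)^z − 1, y·z). -/

import Mathlib

/-- For real `x ≥ 1`, `y > 0`, `z > 0`:
`(x + y)^z ≤ x^z + x^{z-1} · max((1 + y)^z - 1, y z)` (real powers). -/
theorem stmt_3 (x y z : ℝ) (hx : 1 ≤ x) (hy : 0 < y) (hz : 0 < z) :
    (x + y) ^ z ≤ x ^ z + x ^ (z - 1) * max ((1 + y) ^ z - 1) (y * z) := by
  have hx0 : (0:ℝ) < x := lt_of_lt_of_le one_pos hx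
  set t := y / x with ht
  have ht0 : 0 < t := div_pos hy hx0
  have hty : t ≤ y := by
    rw [ht, div_le_iff₀ hx0]; nlinarith
  have hxy : x + y = x * (1 + t) := by rw [ht]; field_simp
  have hsplit : (x + y) ^ z = x ^ z * (1 + t) ^ z := by
    rw [hxy, Real.mul_rpow hx0.le (by linarith)]
  have hxz1 : x ^ z * t = x ^ (z - 1) * y := by
    rw [Real.rpow_sub hx0, Real.rpow_one, ht]; field_simp
  have hxzpos : (0:ℝ) < x ^ z := Real.rpow_pos_of_pos hx0 z
  rcases le_or_gt z 1 with hz1 | hz1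
  · -- Bernoulli: (1+t)^z ≤ 1 + z*t
    have hb : (1 + t) ^ z ≤ 1 + z * t :=
      rpow_one_add_le_one_add_mul_self (by linarith) hz.le hz1
    have h1 : (x + y) ^ z ≤ x ^ z + x ^ (z - 1) * (y * z) := by
      rw [hsplit]
      calc x ^ z * (1 + t) ^ z ≤ x ^ z * (1 + z * t) :=
            mul_le_mul_of_nonneg_left hb hxzpos.le
        _ = x ^ z + x ^ z * t * z := by ring
        _ = x ^ z + x ^ (z - 1) * (y * z) := by rw [hxz1]; ring
    refine h1.trans ?_
    gcongr
    exact le_max_right _ _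
  · -- convexity of s ↦ s^z on [0,∞)
    have hconv := convexOn_rpow hz1.le
    have ha : (0:ℝ) ≤ 1 - t / y := by
      have : t / y ≤ 1 := by rw [div_le_one hy]; exact hty
      linarith
    have hb : (0:ℝ) ≤ t / y := (div_pos ht0 hy).le
    have hab : (1 - t / y) + t / y = 1 := by ring
    have hmem1 : (1:ℝ) ∈ Set.Ici (0:ℝ) := by norm_num
    have hmem2 : (1 + y) ∈ Set.Ici (0:ℝ) := by simp; linarith
    have key := hconv.2 hmem1 hmem2 ha hb hab
    have hcomb : (1 - t / y) * 1 + (t / y) * (1 + y) = 1 + t := by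
      field_simp; ring
    simp only [smul_eq_mul] at key
    rw [hcomb] at key
    have key' : (1 + t) ^ z ≤ (1 - t / y) * 1 + (t / y) * (1 + y) ^ z := by
      simpa [Real.one_rpow] using key
    have h1 : (x + y) ^ z ≤ x ^ z + x ^ (z - 1) * ((1 + y) ^ z - 1) := by
      rw [hsplit]
      have : x ^ z * (1 + t) ^ z ≤ x ^ z * ((1 - t / y) * 1 + (t / y) * (1 + y) ^ z) :=
        mul_le_mul_of_nonneg_left key' hxzpos.le
      calc x ^ z * (1 + t) ^ z
          ≤ x ^ z * ((1 - t / y) * 1 + (t / y) * (1 + y) ^ z) := this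
        _ = x ^ z + (x ^ z * t) / y * ((1 + y) ^ z - 1) := by field_simp; ring
        _ = x ^ z + x ^ (z - 1) * ((1 + y) ^ z - 1) := by
            rw [hxz1]; field_simp
    refine h1.trans ?_
    gcongr
    exact le_max_left _ _
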